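/- Let f be a meromorphic function on ℂ, let α, β be nonzero complex numbers, let p ≥ 1, q ≥ 1 be integers, and suppose near 0 we have f(z) = α z^{−p}(1 + o(1)) and V(z) = β z^{q}(1 + o(1)) with f and V meromorphic. If m ≥ 2 is an integer and (fV)^{(m)} − f^{(m)}V vanishes identically near 0, then the coefficient identity p(p+1)⋯(p+m−1) = (p−q)(p−q+1)⋯(p−q+m−1) holds, where the right-hand side is interpreted as the falling product (−p+q)(−p+q−1)⋯(−p+q−m+1) up to sign. -/

import Mathlib

open Filter Set Topology

private lemma ev_deriv_punct {f g : ℂ → ℂ} (h : f =ᶠ[𝓝[≠](0:ℂ)] g) :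
    deriv f =ᶠ[𝓝[≠](0:ℂ)] deriv g := by
  obtain ⟨U, hUo, hU0, hsub⟩ := mem_nhdsWithin.mp h
  have hmem : (U ∩ {(0:ℂ)}ᶜ) ∈ 𝓝[≠](0:ℂ) :=
    mem_nhdsWithin.mpr ⟨U, hUo, hU0, subset_rfl⟩
  filter_upwards [hmem] with z hz
  have hfg : f =ᶠ[𝓝 z] g :=
    eventually_of_mem ((hUo.inter isOpen_compl_singleton).mem_nhds hz)
      (fun w hw => hsub hw)
  exact hfg.deriv_eq

private lemma analyticAt_deriv {B : ℂ → ℂ} (hB : AnalyticAt ℂ B 0) :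
    AnalyticAt ℂ (deriv B) 0 := by
  have h1 : AnalyticAt ℂ (fun z => fderiv ℂ B z) 0 := hB.fderiv
  have h2 := ((ContinuousLinearMap.apply ℂ ℂ (1:ℂ)).analyticAt
    ((fun z => fderiv ℂ B z) 0)).comp h1
  have : (fun z => (fderiv ℂ B z) 1) = deriv B := by
    funext z; exact fderiv_apply_one_eq_deriv
  rw [← this]; exact h2

private lemma ev_iter_punct {f g : ℂ → ℂ} (h : f =ᶠ[𝓝[≠](0:ℂ)] g) (m : ℕ) :
    iteratedDeriv m f =ᶠ[𝓝[≠](0:ℂ)] iteratedDeriv m g := by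
  induction m with
  | zero => simpa [iteratedDeriv_zero] using h
  | succ m ih => simpa [iteratedDeriv_succ] using ev_deriv_punct ih

private lemma key_laurent (n : ℤ) (A : ℂ → ℂ) (hA : AnalyticAt ℂ A 0) (m : ℕ) :
    ∃ B : ℂ → ℂ, AnalyticAt ℂ B 0 ∧
      B 0 = (∏ i ∈ Finset.range m, ((n : ℂ) - i)) * A 0 ∧
      iteratedDeriv m (fun w => w ^ n * A w) =ᶠ[𝓝[≠](0:ℂ)]
        fun z => z ^ (n - m) * B z := by
  induction m with
  | zero => exact ⟨A, hA, by simp, by simp [iteratedDeriv_zero]⟩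
  | succ m ih =>
    obtain ⟨B, hB, hB0, hev⟩ := ih
    refine ⟨fun z => (((n : ℂ) - m) * B z + z * deriv B z), ?_, ?_, ?_⟩
    · exact ((analyticAt_const.sub analyticAt_const).mul hB).add
        (analyticAt_id.mul (analyticAt_deriv hB))
    · simp only [hB0, Finset.prod_range_succ]
      push_cast
      ring
    · have hdiff : ∀ᶠ z in 𝓝[≠](0:ℂ), DifferentiableAt ℂ B z :=
        (hB.eventually_analyticAt.mono (fun z hz => hz.differentiableAt)).filter_mono
          nhdsWithin_le_nhds
      have step : (fun z => deriv (fun w => w ^ (n - m) * B w) z) =ᶠ[𝓝[≠](0:ℂ)]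
          fun z => z ^ (n - (m+1:ℕ)) * (((n : ℂ) - m) * B z + z * deriv B z) := by
        filter_upwards [hdiff, self_mem_nhdsWithin] with z hz hz0
        have hz0' : z ≠ 0 := hz0
        have hd : HasDerivAt (fun w : ℂ => w ^ (n - m) * B w)
            (((n - m : ℤ) : ℂ) * z ^ (n - m - 1) * B z + z ^ (n - m) * deriv B z) z :=
          (hasDerivAt_zpow (n - m) z (Or.inl hz0')).mul hz.hasDerivAt
        rw [hd.deriv]
        have he : (n - (m+1:ℕ) : ℤ) = n - m - 1 := by push_cast; ring
        rw [he, show (n - (m:ℤ)) = (n - m - 1) + 1 by ring, zpow_add_one₀ hz0']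
        push_cast
        ring
      calc iteratedDeriv (m+1) (fun w => w ^ n * A w)
          = deriv (iteratedDeriv m (fun w => w ^ n * A w)) := by
            rw [iteratedDeriv_succ]
        _ =ᶠ[𝓝[≠](0:ℂ)] deriv (fun z => z ^ (n - m) * B z) := ev_deriv_punct hev
        _ =ᶠ[𝓝[≠](0:ℂ)] _ := step

theorem laurent_coefficient_extraction (m p q : ℕ) (hm : 2 ≤ m) (hp : 1 ≤ p) (hq : 1 ≤ q)
    (α β : ℂ) (hα : α ≠ 0) (hβ : β ≠ 0) (f V h k : ℂ → ℂ)
    (hh : AnalyticAt ℂ h 0) (hk : AnalyticAt ℂ k 0) (hh0 : h 0 = 1) (hk0 : k 0 = 1)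
    (hf : ∀ᶠ z in nhdsWithin 0 {(0 : ℂ)}ᶜ, f z = α * z ^ (-(p : ℤ)) * h z)
    (hV : ∀ᶠ z in nhdsWithin 0 {(0 : ℂ)}ᶜ, V z = β * z ^ (q : ℤ) * k z)
    (hU : ∀ᶠ z in nhdsWithin 0 {(0 : ℂ)}ᶜ,
      iteratedDeriv m (fun w => f w * V w) z - iteratedDeriv m f z * V z = 0) :
    ∏ i ∈ Finset.range m, ((p : ℤ) + i) = ∏ i ∈ Finset.range m, ((p : ℤ) - q + i) := by
  -- rewrite f and f*V in normal form
  have hfe : f =ᶠ[𝓝[≠](0:ℂ)] fun z => z ^ (-(p:ℤ)) * (α * h z) := by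
    filter_upwards [hf] with z hz; rw [hz]; ring
  have hfVe : (fun w => f w * V w) =ᶠ[𝓝[≠](0:ℂ)]
      fun z => z ^ ((q:ℤ) - p) * (α * β * (h z * k z)) := by
    filter_upwards [hf, hV, self_mem_nhdsWithin] with z h1 h2 hz
    have hz0 : z ≠ 0 := hz
    rw [h1, h2, show ((q:ℤ) - p) = -(p:ℤ) + q by ring, zpow_add₀ hz0]
    ring
  obtain ⟨B₁, hB₁, hB₁0, hev₁⟩ := key_laurent ((q:ℤ) - p)
    (fun z => α * β * (h z * k z)) (analyticAt_const.mul (hh.mul hk)) m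
  obtain ⟨B₂, hB₂, hB₂0, hev₂⟩ := key_laurent (-(p:ℤ))
    (fun z => α * h z) (analyticAt_const.mul hh) m
  have hev₁' := (ev_iter_punct hfVe m).trans hev₁
  have hev₂' := (ev_iter_punct hfe m).trans hev₂
  -- extract the relation between B₁ and B₂
  have hBeq : B₁ =ᶠ[𝓝[≠](0:ℂ)] fun z => β * (B₂ z * k z) := by
    filter_upwards [hU, hev₁', hev₂', hV, self_mem_nhdsWithin] with z h0 h1 h2 h3 hz
    have hz0 : z ≠ 0 := hz
    rw [h1, h2, h3] at h0
    have hzz : z ^ (-(p:ℤ) - m) * z ^ (q:ℤ) = z ^ ((q:ℤ) - p - m) := by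
      rw [← zpow_add₀ hz0]; ring_nf
    have hne : z ^ ((q:ℤ) - p - m) ≠ 0 := zpow_ne_zero _ hz0
    apply mul_left_cancel₀ hne
    have h0' : z ^ ((q:ℤ) - p - m) * B₁ z
        = z ^ ((q:ℤ) - p - m) * (β * (B₂ z * k z)) := by
      rw [sub_eq_zero] at h0
      calc z ^ ((q:ℤ) - p - m) * B₁ z
          = z ^ (-(p:ℤ) - m) * B₂ z * (β * z ^ (q:ℤ) * k z) := h0
        _ = (z ^ (-(p:ℤ) - m) * z ^ (q:ℤ)) * (β * (B₂ z * k z)) := by ring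
        _ = z ^ ((q:ℤ) - p - m) * (β * (B₂ z * k z)) := by rw [hzz]
    exact h0'
  -- take limits at 0
  have hlim : B₁ 0 = β * (B₂ 0 * k 0) := by
    have t1 : Tendsto B₁ (𝓝[≠](0:ℂ)) (𝓝 (B₁ 0)) :=
      hB₁.continuousAt.continuousWithinAt
    have t2 : Tendsto (fun z => β * (B₂ z * k z)) (𝓝[≠](0:ℂ))
        (𝓝 (β * (B₂ 0 * k 0))) :=
      (continuousAt_const.mul (hB₂.continuousAt.mul hk.continuousAt)).continuousWithinAt
    exact tendsto_nhds_unique (t1.congr' hBeq) t2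
  rw [hB₁0, hB₂0, hh0, hk0] at hlim
  push_cast at hlim
  have hαβ : α * β ≠ 0 := mul_ne_zero hα hβ
  have hPeq : (∏ i ∈ Finset.range m, ((q:ℂ) - p - i))
      = ∏ i ∈ Finset.range m, (-(p:ℂ) - i) := by
    apply mul_right_cancel₀ hαβ
    linear_combination hlim
  have hsign : (∏ i ∈ Finset.range m, ((p:ℂ) - q + i))
      = ∏ i ∈ Finset.range m, ((p:ℂ) + i) := by
    have e1 : (∏ i ∈ Finset.range m, ((q:ℂ) - p - i))
        = (-1)^m * ∏ i ∈ Finset.range m, ((p:ℂ) - q + i) := by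
      rw [show ((-1:ℂ))^m = ∏ _i ∈ Finset.range m, (-1:ℂ) by simp,
        ← Finset.prod_mul_distrib]
      exact Finset.prod_congr rfl (fun i _ => by ring)
    have e2 : (∏ i ∈ Finset.range m, (-(p:ℂ) - i))
        = (-1)^m * ∏ i ∈ Finset.range m, ((p:ℂ) + i) := by
      rw [show ((-1:ℂ))^m = ∏ _i ∈ Finset.range m, (-1:ℂ) by simp,
        ← Finset.prod_mul_distrib]
      exact Finset.prod_congr rfl (fun i _ => by ring)
    rw [e1, e2] at hPeq
    exact mul_left_cancel₀ (pow_ne_zero m (by norm_num : (-1:ℂ) ≠ 0)) hPeq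
  have : ((∏ i ∈ Finset.range m, ((p:ℤ) + i) : ℤ) : ℂ)
      = ((∏ i ∈ Finset.range m, ((p:ℤ) - q + i) : ℤ) : ℂ) := by
    push_cast
    exact hsign.symm
  exact_mod_cast this
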